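/- Suppose M satisfies: every matrix [[a,b],[0,d]] ∈ M has a ≥ d; every matrix [[a,0],[c,d]] ∈ M has a > d; and no matrix in M has top-left entry 0 (no matrix of the form [[0,b],[c,d]]). Then for every vector V = (v₁,v₂) with v₁, v₂ > 0, the sequence of maps ω ↦ N(Pₙ(ω)V) converges uniformly on S^ℕ. -/

import Mathlib

open Matrix Filter

/-- A 2×2 real matrix is nonnegative and column-allowable. -/
def ColAllowable (A : Matrix (Fin 2) (Fin 2) ℝ) : Prop :=
  (∀ i j, 0 ≤ A i j) ∧ 0 < A 0 0 + A 1 0 ∧ 0 < A 0 1 + A 1 1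

/-- `n(X) = x₁/(x₁+x₂)`. -/
noncomputable def nv (X : Fin 2 → ℝ) : ℝ := X 0 / (X 0 + X 1)

/-- The normalized vector `N(X)`. -/
noncomputable def Nv (X : Fin 2 → ℝ) : Fin 2 → ℝ := ![nv X, 1 - nv X]

/-- `Pₙ(ω) = M_{ω₁} M_{ω₂} ⋯ M_{ωₙ}`. -/
def Pprod {s : ℕ} (M : Fin s → Matrix (Fin 2) (Fin 2) ℝ) (ω : ℕ → Fin s) (n : ℕ) :
    Matrix (Fin 2) (Fin 2) ℝ :=
  ((List.range n).map (fun i => M (ω i))).prod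

namespace Stmt11Aux

variable {s : ℕ}
noncomputable def psi (M : Fin s → Matrix (Fin 2) (Fin 2) ℝ) (k : Fin s) (v : ℝ) : ℝ :=
  (M k 1 0 + M k 1 1 * v) / (M k 0 0 + M k 0 1 * v)
noncomputable def Psi (M : Fin s → Matrix (Fin 2) (Fin 2) ℝ) (w : List (Fin s)) (v : ℝ) : ℝ :=
  w.foldr (psi M) v
open Classical in
noncomputable def cnt (M : Fin s → Matrix (Fin 2) (Fin 2) ℝ) (w : List (Fin s)) : ℕ :=
  w.foldr (fun k n => if 0 < M k 1 0 then n + 1 else n) 0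
variable {M : Fin s → Matrix (Fin 2) (Fin 2) ℝ}
lemma Psi_nil (v : ℝ) : Psi M [] v = v := rfl
lemma Psi_cons (k : Fin s) (w : List (Fin s)) (v : ℝ) :
    Psi M (k :: w) v = psi M k (Psi M w v) := rfl
lemma Psi_append (w₁ w₂ : List (Fin s)) (v : ℝ) :
    Psi M (w₁ ++ w₂) v = Psi M w₁ (Psi M w₂ v) := List.foldr_append ..
lemma Psi_single (k : Fin s) (v : ℝ) : Psi M [k] v = psi M k v := rfl
open Classical in
lemma cnt_cons (k : Fin s) (w : List (Fin s)) :
    cnt M (k :: w) = if 0 < M k 1 0 then cnt M w + 1 else cnt M w := rfl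
lemma cnt_append (u v : List (Fin s)) : cnt M (u ++ v) = cnt M u + cnt M v := by
  induction u with
  | nil => simp [cnt]
  | cons k u ih =>
      rw [List.cons_append, cnt_cons, cnt_cons, ih]
      split <;> omega
lemma apos (hM : ∀ k, ColAllowable (M k)) (h3 : ∀ k, M k 0 0 ≠ 0) (k : Fin s) :
    0 < M k 0 0 := (h3 k).lt_of_le' ((hM k).1 0 0)
lemma den_pos (hM : ∀ k, ColAllowable (M k)) (h3 : ∀ k, M k 0 0 ≠ 0) (k : Fin s)
    {v : ℝ} (hv : 0 ≤ v) : 0 < M k 0 0 + M k 0 1 * v :=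
  add_pos_of_pos_of_nonneg (apos hM h3 k) (mul_nonneg ((hM k).1 0 1) hv)
lemma psi_nonneg (hM : ∀ k, ColAllowable (M k)) (h3 : ∀ k, M k 0 0 ≠ 0) (k : Fin s)
    {v : ℝ} (hv : 0 ≤ v) : 0 ≤ psi M k v :=
  div_nonneg (add_nonneg ((hM k).1 1 0) (mul_nonneg ((hM k).1 1 1) hv)) (den_pos hM h3 k hv).le
lemma psi_pos (hM : ∀ k, ColAllowable (M k)) (h3 : ∀ k, M k 0 0 ≠ 0) (k : Fin s) {v : ℝ}
    (hv : 0 ≤ v) (h : 0 < M k 1 0 ∨ (0 < M k 1 1 ∧ 0 < v)) : 0 < psi M k v := by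
  apply div_pos _ (den_pos hM h3 k hv)
  rcases h with h | ⟨hd, hv'⟩
  · exact add_pos_of_pos_of_nonneg h (mul_nonneg ((hM k).1 1 1) hv)
  · exact add_pos_of_nonneg_of_pos ((hM k).1 1 0) (mul_pos hd hv')



/-- One-sided log difference estimate for affine maps. -/
lemma log_affine_diff {c d x y W : ℝ} (hc : 0 < c) (hd : 0 ≤ d)
    (hx0 : 0 ≤ x) (hy0 : 0 ≤ y) (hxW : x ≤ W) :
    Real.log (c + d*x) - Real.log (c + d*y) ≤ d/c*W := by
  have p1 : 0 < c + d*x := by positivity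
  have p2 : 0 < c + d*y := by positivity
  have h := (Real.log_div p1.ne' p2.ne').symm
  have h2 : Real.log ((c + d*x)/(c + d*y)) ≤ (c + d*x)/(c + d*y) - 1 :=
    Real.log_le_sub_one_of_pos (by positivity)
  have h3 : (c + d*x)/(c + d*y) - 1 = d*(x-y)/(c + d*y) := by field_simp; ring
  have h4 : d*(x-y)/(c + d*y) ≤ d*W/(c + d*y) := by
    apply div_le_div_of_nonneg_right ?_ p2.le
    nlinarith
  have h5 : d*W/(c + d*y) ≤ d*W/c := by
    have hW0 : 0 ≤ W := le_trans hx0 hxW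
    have hdW : 0 ≤ d*W := by positivity
    apply div_le_div_of_nonneg_left hdW hc
    nlinarith
  have h6 : d*W/c = d/c*W := by ring
  linarith [h.le.trans (h2.trans_eq h3)]

/-- Two-sided κ-type estimate. -/
lemma kap_est {a b c d x y W : ℝ} (ha : 0 < a) (hb : 0 ≤ b) (hc : 0 < c) (hd : 0 ≤ d)
    (hx0 : 0 ≤ x) (hy0 : 0 ≤ y) (hxW : x ≤ W) (hyW : y ≤ W) :
    |(Real.log (c + d*x) - Real.log (a + b*x)) - (Real.log (c + d*y) - Real.log (a + b*y))|
      ≤ (d/c + b/a) * W := by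
  have e1 := log_affine_diff hc hd hx0 hy0 hxW
  have e2 := log_affine_diff hc hd hy0 hx0 hyW
  have e3 := log_affine_diff ha hb hx0 hy0 hxW
  have e4 := log_affine_diff ha hb hy0 hx0 hyW
  rw [abs_le]
  constructor <;> nlinarith [abs_nonneg x]

/-- 1-Lipschitz (in log coordinates) estimate for column-allowable maps with `c = 0`. -/
lemma c0_lip_aux {a b d x y : ℝ} (ha : 0 < a) (hb : 0 ≤ b) (hd : 0 < d)
    (hx : 0 < x) (hy : 0 < y) (hxy : y ≤ x) :
    0 ≤ (Real.log (d*x) - Real.log (a + b*x)) - (Real.log (d*y) - Real.log (a + b*y)) ∧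
    (Real.log (d*x) - Real.log (a + b*x)) - (Real.log (d*y) - Real.log (a + b*y))
      ≤ Real.log x - Real.log y := by
  have p1 : 0 < a + b*x := by positivity
  have p2 : 0 < a + b*y := by positivity
  rw [Real.log_mul hd.ne' hx.ne', Real.log_mul hd.ne' hy.ne']
  have hlogxy : Real.log y ≤ Real.log x := Real.log_le_log hy hxy
  have h1 : Real.log (a + b*y) ≤ Real.log (a + b*x) := Real.log_le_log p2 (by nlinarith)
  have h2 : Real.log (a + b*x) - Real.log (a + b*y) ≤ Real.log x - Real.log y := by
    have key : (a + b*x) * y ≤ x * (a + b*y) := by nlinarith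
    have := Real.log_le_log (by positivity) key
    rw [Real.log_mul p1.ne' hy.ne', Real.log_mul hx.ne' p2.ne'] at this
    linarith
  constructor <;> linarith

lemma c0_lip {a b d x y : ℝ} (ha : 0 < a) (hb : 0 ≤ b) (hd : 0 < d)
    (hx : 0 < x) (hy : 0 < y) :
    |(Real.log (d*x) - Real.log (a + b*x)) - (Real.log (d*y) - Real.log (a + b*y))|
      ≤ |Real.log x - Real.log y| := by
  rcases le_total y x with h | h
  · obtain ⟨l, u⟩ := c0_lip_aux ha hb hd hx hy h
    rw [abs_of_nonneg l, abs_of_nonneg (by linarith [Real.log_le_log hy h] : (0:ℝ) ≤ Real.log x - Real.log y)]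
    exact u
  · obtain ⟨l, u⟩ := c0_lip_aux ha hb hd hy hx h
    rw [abs_sub_comm, abs_sub_comm (Real.log x)]
    rw [abs_of_nonneg l, abs_of_nonneg (by linarith [Real.log_le_log hx h] : (0:ℝ) ≤ Real.log y - Real.log x)]
    exact u

/-- MVT-based contraction estimate for maps with `c > 0`. -/
lemma mvt_lip {a b c d B x y : ℝ} (ha : 0 < a) (hb : 0 ≤ b) (hc : 0 < c) (hd : 0 ≤ d)
    (hS : 0 < a*d + b*c) (hB : 0 < B)
    (hx : 0 < x) (hxB : x ≤ B) (hy : 0 < y) (hyB : y ≤ B) :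
    |(Real.log (c + d*x) - Real.log (a + b*x)) - (Real.log (c + d*y) - Real.log (a + b*y))|
      ≤ ((a*d + b*c)*B/((a*d + b*c)*B + a*c)) * |Real.log x - Real.log y| := by
  set S := a*d + b*c with hSdef
  set lam := S*B/(S*B + a*c) with hlam
  set H : ℝ → ℝ := fun u => Real.log (c + d*Real.exp u) - Real.log (a + b*Real.exp u) with hH
  set H' : ℝ → ℝ := fun u => d*Real.exp u/(c + d*Real.exp u) - b*Real.exp u/(a + b*Real.exp u)
    with hH'
  have hderiv : ∀ u ∈ Set.Iic (Real.log B), HasDerivWithinAt H (H' u) (Set.Iic (Real.log B)) u := by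
    intro u _
    have p1 : 0 < c + d*Real.exp u := by positivity
    have p2 : 0 < a + b*Real.exp u := by positivity
    have e1 : HasDerivAt (fun u => c + d*Real.exp u) (d*Real.exp u) u :=
      ((Real.hasDerivAt_exp u).const_mul d).const_add c
    have e2 : HasDerivAt (fun u => a + b*Real.exp u) (b*Real.exp u) u :=
      ((Real.hasDerivAt_exp u).const_mul b).const_add a
    exact ((e1.log p1.ne').sub (e2.log p2.ne')).hasDerivWithinAt
  have hbound : ∀ u ∈ Set.Iic (Real.log B), ‖H' u‖ ≤ lam := by
    intro u hu
    have hE : Real.exp u ≤ B := by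
      calc Real.exp u ≤ Real.exp (Real.log B) := Real.exp_le_exp.mpr hu
      _ = B := Real.exp_log hB
    set E := Real.exp u with hEdef
    have hE0 : 0 < E := Real.exp_pos u
    have p1 : 0 < c + d*E := by positivity
    have p2 : 0 < a + b*E := by positivity
    have key : H' u = E*(a*d - b*c)/((c + d*E)*(a + b*E)) := by
      rw [hH']
      field_simp
      ring
    rw [Real.norm_eq_abs, key, abs_div, abs_of_pos (by positivity : (0:ℝ) < (c + d*E)*(a + b*E))]
    have habs : |E*(a*d - b*c)| ≤ E*S := by
      rw [abs_mul, abs_of_pos hE0]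
      have : |a*d - b*c| ≤ S := abs_le.mpr ⟨by nlinarith, by nlinarith⟩
      nlinarith
    have hden : a*c + S*E ≤ (c + d*E)*(a + b*E) := by nlinarith [mul_nonneg (mul_nonneg hb hd) (mul_nonneg hE0.le hE0.le)]
    have step1 : |E*(a*d - b*c)|/((c + d*E)*(a + b*E)) ≤ E*S/(a*c + S*E) := by
      apply (div_le_div_of_nonneg_right habs (by positivity)).trans
      apply div_le_div_of_nonneg_left (by positivity) (by positivity) hden
    apply step1.trans
    rw [hlam, div_le_div_iff₀ (by positivity) (by positivity)]
    nlinarith [mul_le_mul_of_nonneg_right hE (by positivity : (0:ℝ) ≤ S*(a*c))]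
  have hmemx : Real.log x ∈ Set.Iic (Real.log B) := Real.log_le_log hx hxB
  have hmemy : Real.log y ∈ Set.Iic (Real.log B) := Real.log_le_log hy hyB
  have := Convex.norm_image_sub_le_of_norm_hasDerivWithin_le hderiv hbound (convex_Iic _)
    hmemy hmemx
  rw [hH] at this
  simp only [Real.exp_log hx, Real.exp_log hy, Real.norm_eq_abs] at this
  exact this





lemma exists_bound (f : Fin s → ℝ) : ∃ C, 1 ≤ C ∧ ∀ k, f k ≤ C := by
  classical
  refine ⟨(insert 1 (Finset.univ.image f)).max' ⟨1, by simp⟩, ?_, fun k => ?_⟩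
  · exact Finset.le_max' _ _ (by simp)
  · exact Finset.le_max' _ _ (Finset.mem_insert_of_mem (Finset.mem_image_of_mem f (Finset.mem_univ k)))

lemma exists_pos_lb (f : Fin s → ℝ) (hf : ∀ k, 0 < f k) :
    ∃ δ, 0 < δ ∧ δ ≤ 1 ∧ ∀ k, δ ≤ f k := by
  classical
  have hne : (insert (1:ℝ) (Finset.univ.image f)).Nonempty := ⟨1, by simp⟩
  refine ⟨(insert (1:ℝ) (Finset.univ.image f)).min' hne, ?_, ?_, fun k => ?_⟩
  · have hmem := Finset.min'_mem (insert (1:ℝ) (Finset.univ.image f)) hne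
    rcases Finset.mem_insert.mp hmem with h | h
    · rw [h]; norm_num
    · obtain ⟨k, _, h⟩ := Finset.mem_image.mp h
      rw [← h]; exact hf k
  · exact Finset.min'_le _ _ (by simp)
  · exact Finset.min'_le _ _ (Finset.mem_insert_of_mem (Finset.mem_image_of_mem f (Finset.mem_univ k)))

lemma exists_lt_one_ub (f : Fin s → ℝ) (hf : ∀ k, f k < 1) :
    ∃ lam : ℝ, 0 < lam ∧ lam < 1 ∧ ∀ k, f k ≤ lam := by
  classical
  have hne : (insert (1/2:ℝ) (Finset.univ.image f)).Nonempty := ⟨1/2, by simp⟩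
  refine ⟨(insert (1/2:ℝ) (Finset.univ.image f)).max' hne, ?_, ?_, fun k => ?_⟩
  · have h12 : (1/2 : ℝ) ≤ _ := Finset.le_max' _ _ (Finset.mem_insert_self (1/2:ℝ) (Finset.univ.image f))
    linarith
  · have hmem := Finset.max'_mem (insert (1/2:ℝ) (Finset.univ.image f)) hne
    rcases Finset.mem_insert.mp hmem with h | h
    · rw [h]; norm_num
    · obtain ⟨k, _, h⟩ := Finset.mem_image.mp h
      rw [← h]; exact hf k
  · exact Finset.le_max' _ _ (Finset.mem_insert_of_mem (Finset.mem_image_of_mem f (Finset.mem_univ k)))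


lemma exists_consts (hM : ∀ k, ColAllowable (M k))
    (h1 : ∀ k, M k 1 0 = 0 → M k 1 1 ≤ M k 0 0)
    (h2 : ∀ k, M k 0 1 = 0 → M k 1 1 < M k 0 0)
    (h3 : ∀ k, M k 0 0 ≠ 0) (v₀ : ℝ) (hv₀ : 0 ≤ v₀) :
    ∃ B del kap lam : ℝ,
      (1 ≤ B ∧ v₀ ≤ B ∧ ∀ k v, 0 ≤ v → v ≤ B → psi M k v ≤ B) ∧
      (0 < del ∧ ∀ k, M k 1 0 = 0 → ∀ v, 0 ≤ v → v ≤ B → psi M k v ≤ v/(1+del*v)) ∧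
      (1 ≤ kap ∧ ∀ k, 0 < M k 1 0 → ∀ W x y, 0 ≤ x → x ≤ W → 0 ≤ y → y ≤ W →
        |Real.log (psi M k x) - Real.log (psi M k y)| ≤ kap*W) ∧
      (0 < lam ∧ lam < 1 ∧ ∀ k, 0 < M k 1 0 → ∀ x y, 0 < x → x ≤ B → 0 < y → y ≤ B →
        |Real.log (psi M k x) - Real.log (psi M k y)| ≤ lam*|Real.log x - Real.log y|) := by
  classical
  have ha : ∀ k, 0 < M k 0 0 := apos hM h3
  have hbnn : ∀ k, 0 ≤ M k 0 1 := fun k => (hM k).1 0 1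
  have hcnn : ∀ k, 0 ≤ M k 1 0 := fun k => (hM k).1 1 0
  have hdnn : ∀ k, 0 ≤ M k 1 1 := fun k => (hM k).1 1 1
  have hcol2 : ∀ k, 0 < M k 0 1 + M k 1 1 := fun k => (hM k).2.2
  have hSpos : ∀ k, 0 < M k 1 0 → 0 < M k 0 0 * M k 1 1 + M k 0 1 * M k 1 0 := by
    intro k hc
    by_cases hd : 0 < M k 1 1
    · nlinarith [mul_pos (ha k) hd, mul_nonneg (hbnn k) (hcnn k)]
    · have hd0 : M k 1 1 = 0 := le_antisymm (not_lt.mp hd) (hdnn k)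
      have hb : 0 < M k 0 1 := by have := hcol2 k; rw [hd0] at this; linarith
      nlinarith [mul_pos hb hc, mul_nonneg (ha k).le (hdnn k)]
  -- B
  obtain ⟨Bf, hBf1, hBff⟩ := exists_bound (fun k =>
    if 0 < M k 0 1 then max (M k 1 0 / M k 0 0) (M k 1 1 / M k 0 1)
    else M k 1 0 / (M k 0 0 - M k 1 1))
  set B := max Bf v₀ with hBdef
  have hB1 : 1 ≤ B := le_trans hBf1 (le_max_left _ _)
  have hB0 : 0 < B := lt_of_lt_of_le one_pos hB1
  have hBv₀ : v₀ ≤ B := le_max_right _ _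
  have hBinv : ∀ k v, 0 ≤ v → v ≤ B → psi M k v ≤ B := by
    intro k v hv0 hvB
    have hden : 0 < M k 0 0 + M k 0 1 * v :=
      add_pos_of_pos_of_nonneg (ha k) (mul_nonneg (hbnn k) hv0)
    rw [psi, div_le_iff₀ hden]
    by_cases hb : 0 < M k 0 1
    · have hBm := (hBff k).trans (le_max_left Bf v₀)
      rw [if_pos hb] at hBm
      have h₁ : M k 1 0 ≤ B * M k 0 0 :=
        (div_le_iff₀ (ha k)).mp ((le_max_left _ _).trans hBm)
      have h₂ : M k 1 1 ≤ B * M k 0 1 :=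
        (div_le_iff₀ hb).mp ((le_max_right _ _).trans hBm)
      nlinarith [mul_le_mul_of_nonneg_right h₂ hv0]
    · have hb0 : M k 0 1 = 0 := le_antisymm (not_lt.mp hb) (hbnn k)
      by_cases hc : M k 1 0 = 0
      · rw [hb0, hc]
        nlinarith [mul_le_mul_of_nonneg_right (h1 k hc) hv0,
          mul_le_mul_of_nonneg_left hvB (ha k).le]
      · have hda := h2 k hb0
        have hBm := (hBff k).trans (le_max_left Bf v₀)
        rw [if_neg hb] at hBm
        have hckey : M k 1 0 ≤ B * (M k 0 0 - M k 1 1) :=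
          (div_le_iff₀ (by linarith)).mp hBm
        rw [hb0]
        nlinarith [mul_le_mul_of_nonneg_left hvB (hdnn k)]
  -- del
  obtain ⟨del, hdel0, hdel1, hdelf⟩ := exists_pos_lb (fun k =>
    if M k 1 0 = 0 then
      (if 0 < M k 0 1 then M k 0 1 / max (M k 1 1) 1
       else (M k 0 0 - M k 1 1)/(max (M k 1 1) 1 * B))
    else 1) (by
      intro k
      by_cases hc : M k 1 0 = 0
      · rw [if_pos hc]
        by_cases hb : 0 < M k 0 1
        · rw [if_pos hb]
          exact div_pos hb (lt_of_lt_of_le one_pos (le_max_right _ _))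
        · rw [if_neg hb]
          have hb0 : M k 0 1 = 0 := le_antisymm (not_lt.mp hb) (hbnn k)
          have := h2 k hb0
          apply div_pos (by linarith)
          have : (0:ℝ) < max (M k 1 1) 1 := lt_of_lt_of_le one_pos (le_max_right _ _)
          positivity
      · rw [if_neg hc]; norm_num)
  have hdelP : ∀ k, M k 1 0 = 0 → ∀ v, 0 ≤ v → v ≤ B → psi M k v ≤ v/(1+del*v) := by
    intro k hc v hv0 hvB
    have hm1 : (0:ℝ) < max (M k 1 1) 1 := lt_of_lt_of_le one_pos (le_max_right _ _)
    have hdm : M k 1 1 ≤ max (M k 1 1) 1 := le_max_left _ _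
    have key : M k 1 1 * (1 + del*v) ≤ M k 0 0 + M k 0 1 * v := by
      by_cases hb : 0 < M k 0 1
      · have hd' := hdelf k
        rw [if_pos hc, if_pos hb] at hd'
        have h' : del * max (M k 1 1) 1 ≤ M k 0 1 := (le_div_iff₀ hm1).mp hd'
        nlinarith [h1 k hc, mul_le_mul_of_nonneg_right h' hv0,
          mul_le_mul_of_nonneg_right hdm (mul_nonneg hdel0.le hv0)]
      · have hb0 : M k 0 1 = 0 := le_antisymm (not_lt.mp hb) (hbnn k)
        have hd' := hdelf k
        rw [if_pos hc, if_neg hb] at hd'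
        have h' : del * (max (M k 1 1) 1 * B) ≤ M k 0 0 - M k 1 1 :=
          (le_div_iff₀ (by positivity)).mp hd'
        rw [hb0]
        have hh1 : M k 1 1 * (del * v) ≤ max (M k 1 1) 1 * (del * v) :=
          mul_le_mul_of_nonneg_right hdm (mul_nonneg hdel0.le hv0)
        have hh2 : max (M k 1 1) 1 * (del * v) ≤ max (M k 1 1) 1 * (del * B) := by
          apply mul_le_mul_of_nonneg_left _ hm1.le
          exact mul_le_mul_of_nonneg_left hvB hdel0.le
        nlinarith
    have hden : 0 < M k 0 0 + M k 0 1 * v :=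
      add_pos_of_pos_of_nonneg (ha k) (mul_nonneg (hbnn k) hv0)
    have hden2 : (0:ℝ) < 1 + del*v := by positivity
    rw [psi, hc, div_le_div_iff₀ hden hden2]
    nlinarith [mul_le_mul_of_nonneg_right key hv0]
  -- kap
  obtain ⟨kap, hkap1, hkapf⟩ := exists_bound (fun k =>
    if 0 < M k 1 0 then M k 1 1 / M k 1 0 + M k 0 1 / M k 0 0 else 0)
  have hkapP : ∀ k, 0 < M k 1 0 → ∀ W x y, 0 ≤ x → x ≤ W → 0 ≤ y → y ≤ W →
      |Real.log (psi M k x) - Real.log (psi M k y)| ≤ kap*W := by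
    intro k hc W x y hx0 hxW hy0 hyW
    have hW0 : 0 ≤ W := le_trans hx0 hxW
    have hnum : ∀ z : ℝ, 0 ≤ z → (0:ℝ) < M k 1 0 + M k 1 1 * z := fun z hz =>
      add_pos_of_pos_of_nonneg hc (mul_nonneg (hdnn k) hz)
    have hden : ∀ z : ℝ, 0 ≤ z → (0:ℝ) < M k 0 0 + M k 0 1 * z := fun z hz =>
      add_pos_of_pos_of_nonneg (ha k) (mul_nonneg (hbnn k) hz)
    have hlx : Real.log (psi M k x)
        = Real.log (M k 1 0 + M k 1 1 * x) - Real.log (M k 0 0 + M k 0 1 * x) := by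
      rw [psi]; exact Real.log_div (hnum x hx0).ne' (hden x hx0).ne'
    have hly : Real.log (psi M k y)
        = Real.log (M k 1 0 + M k 1 1 * y) - Real.log (M k 0 0 + M k 0 1 * y) := by
      rw [psi]; exact Real.log_div (hnum y hy0).ne' (hden y hy0).ne'
    rw [hlx, hly]
    have e := kap_est (ha k) (hbnn k) hc (hdnn k) hx0 hy0 hxW hyW
    apply e.trans
    have hk' := hkapf k
    rw [if_pos hc] at hk'
    exact mul_le_mul_of_nonneg_right hk' hW0
  -- lam
  obtain ⟨lam, hlam0, hlam1, hlamf⟩ := exists_lt_one_ub (fun k =>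
    if 0 < M k 1 0 then
      (M k 0 0 * M k 1 1 + M k 0 1 * M k 1 0)*B
        /((M k 0 0 * M k 1 1 + M k 0 1 * M k 1 0)*B + M k 0 0 * M k 1 0)
    else 1/2) (by
      intro k
      by_cases hc : 0 < M k 1 0
      · rw [if_pos hc]
        have hS := hSpos k hc
        rw [div_lt_one (by nlinarith [mul_pos (ha k) hc, mul_pos hS hB0])]
        nlinarith [mul_pos (ha k) hc]
      · rw [if_neg hc]; norm_num)
  have hlamP : ∀ k, 0 < M k 1 0 → ∀ x y, 0 < x → x ≤ B → 0 < y → y ≤ B →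
      |Real.log (psi M k x) - Real.log (psi M k y)| ≤ lam*|Real.log x - Real.log y| := by
    intro k hc x y hx hxB hy hyB
    have hnum : ∀ z : ℝ, 0 ≤ z → (0:ℝ) < M k 1 0 + M k 1 1 * z := fun z hz =>
      add_pos_of_pos_of_nonneg hc (mul_nonneg (hdnn k) hz)
    have hden : ∀ z : ℝ, 0 ≤ z → (0:ℝ) < M k 0 0 + M k 0 1 * z := fun z hz =>
      add_pos_of_pos_of_nonneg (ha k) (mul_nonneg (hbnn k) hz)
    have hlx : Real.log (psi M k x)
        = Real.log (M k 1 0 + M k 1 1 * x) - Real.log (M k 0 0 + M k 0 1 * x) := by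
      rw [psi]; exact Real.log_div (hnum x hx.le).ne' (hden x hx.le).ne'
    have hly : Real.log (psi M k y)
        = Real.log (M k 1 0 + M k 1 1 * y) - Real.log (M k 0 0 + M k 0 1 * y) := by
      rw [psi]; exact Real.log_div (hnum y hy.le).ne' (hden y hy.le).ne'
    rw [hlx, hly]
    have e := mvt_lip (ha k) (hbnn k) hc (hdnn k) (hSpos k hc) hB0 hx hxB hy hyB
    apply e.trans
    have hk' := hlamf k
    rw [if_pos hc] at hk'
    exact mul_le_mul_of_nonneg_right hk' (abs_nonneg _)
  exact ⟨B, del, kap, lam, ⟨hB1, hBv₀, hBinv⟩, ⟨hdel0, hdelP⟩, ⟨hkap1, hkapP⟩,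
    ⟨hlam0, hlam1, hlamP⟩⟩

section It
variable {B del lam : ℝ}

lemma Psi_mem (hM : ∀ k, ColAllowable (M k)) (h3 : ∀ k, M k 0 0 ≠ 0)
    (hBinv : ∀ k v, 0 ≤ v → v ≤ B → psi M k v ≤ B)
    (w : List (Fin s)) {v : ℝ} (hv0 : 0 ≤ v) (hvB : v ≤ B) :
    0 ≤ Psi M w v ∧ Psi M w v ≤ B := by
  induction w with
  | nil => exact ⟨hv0, hvB⟩
  | cons k w ih =>
      rw [Psi_cons]
      exact ⟨psi_nonneg hM h3 k ih.1, hBinv k _ ih.1 ih.2⟩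

lemma hmono {x y : ℝ} (hdel : 0 < del) (hx : 0 ≤ x) (hxy : x ≤ y) :
    x/(1+del*x) ≤ y/(1+del*y) := by
  have hy : 0 ≤ y := hx.trans hxy
  rw [div_le_div_iff₀ (by positivity) (by positivity)]
  nlinarith

lemma run_bound (hM : ∀ k, ColAllowable (M k)) (h3 : ∀ k, M k 0 0 ≠ 0)
    (hB0 : 0 < B) (hBinv : ∀ k v, 0 ≤ v → v ≤ B → psi M k v ≤ B)
    (hdel0 : 0 < del)
    (hdelP : ∀ k, M k 1 0 = 0 → ∀ v, 0 ≤ v → v ≤ B → psi M k v ≤ v/(1+del*v))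
    (w : List (Fin s)) (hw : ∀ k ∈ w, M k 1 0 = 0) {v : ℝ} (hv0 : 0 ≤ v) (hvB : v ≤ B) :
    Psi M w v ≤ B/(1 + w.length * del * B) := by
  induction w with
  | nil => simpa [Psi_nil] using hvB
  | cons k w ih =>
      have hwt : ∀ k ∈ w, M k 1 0 = 0 := fun k hk => hw k (List.mem_cons_of_mem _ hk)
      have hmem := Psi_mem hM h3 hBinv w hv0 hvB
      have hq0 : (0:ℝ) ≤ (w.length : ℝ) := Nat.cast_nonneg _
      have step := hdelP k (hw k (List.mem_cons_self)) _ hmem.1 hmem.2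
      have step2 : Psi M w v / (1 + del * Psi M w v)
          ≤ (B/(1 + w.length * del * B))/(1 + del * (B/(1 + w.length * del * B))) :=
        hmono hdel0 hmem.1 (ih hwt)
      have heq : (B/(1 + w.length * del * B))/(1 + del * (B/(1 + w.length * del * B)))
          = B/(1 + (w.length + 1) * del * B) := by
        have hD : (0:ℝ) < 1 + w.length * del * B := by positivity
        rw [div_div]
        congr 1
        field_simp
        ring
      rw [Psi_cons]
      calc psi M k (Psi M w v) ≤ _ := step
        _ ≤ _ := step2
        _ = B/(1 + (w.length + 1) * del * B) := heq
        _ = B/(1 + (k :: w).length * del * B) := by norm_num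

lemma c0_lip_mat (hM : ∀ k, ColAllowable (M k)) (h3 : ∀ k, M k 0 0 ≠ 0) (k : Fin s)
    (hc : M k 1 0 = 0) (hd : 0 < M k 1 1) {x y : ℝ} (hx : 0 < x) (hy : 0 < y) :
    |Real.log (psi M k x) - Real.log (psi M k y)| ≤ |Real.log x - Real.log y| := by
  have hlx : Real.log (psi M k x)
      = Real.log (M k 1 1 * x) - Real.log (M k 0 0 + M k 0 1 * x) := by
    rw [psi, hc, zero_add]
    exact Real.log_div (by positivity) (den_pos hM h3 k hx.le).ne'
  have hly : Real.log (psi M k y)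
      = Real.log (M k 1 1 * y) - Real.log (M k 0 0 + M k 0 1 * y) := by
    rw [psi, hc, zero_add]
    exact Real.log_div (by positivity) (den_pos hM h3 k hy.le).ne'
  rw [hlx, hly]
  exact c0_lip (apos hM h3 k) ((hM k).1 0 1) hd hx hy

lemma outer_bound (hM : ∀ k, ColAllowable (M k)) (h3 : ∀ k, M k 0 0 ≠ 0)
    (hBinv : ∀ k v, 0 ≤ v → v ≤ B → psi M k v ≤ B)
    (hlam0 : 0 < lam)
    (hlamP : ∀ k, 0 < M k 1 0 → ∀ x y, 0 < x → x ≤ B → 0 < y → y ≤ B →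
      |Real.log (psi M k x) - Real.log (psi M k y)| ≤ lam*|Real.log x - Real.log y|)
    (w : List (Fin s)) (hw : ∀ k ∈ w, M k 1 0 = 0 → 0 < M k 1 1)
    {x y : ℝ} (hx : 0 < x) (hxB : x ≤ B) (hy : 0 < y) (hyB : y ≤ B) :
    (0 < Psi M w x ∧ Psi M w x ≤ B) ∧ (0 < Psi M w y ∧ Psi M w y ≤ B) ∧
      |Real.log (Psi M w x) - Real.log (Psi M w y)|
        ≤ lam ^ (cnt M w) * |Real.log x - Real.log y| := by
  induction w with
  | nil =>
      refine ⟨⟨hx, hxB⟩, ⟨hy, hyB⟩, ?_⟩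
      simp [Psi_nil, cnt]
  | cons k w ih =>
      have hwt : ∀ k ∈ w, M k 1 0 = 0 → 0 < M k 1 1 :=
        fun k hk => hw k (List.mem_cons_of_mem _ hk)
      obtain ⟨⟨hX, hXB⟩, ⟨hY, hYB⟩, hbound⟩ := ih hwt
      rw [Psi_cons, Psi_cons]
      by_cases hck : 0 < M k 1 0
      · refine ⟨⟨psi_pos hM h3 k hX.le (Or.inl hck), hBinv k _ hX.le hXB⟩,
          ⟨psi_pos hM h3 k hY.le (Or.inl hck), hBinv k _ hY.le hYB⟩, ?_⟩
        rw [cnt_cons, if_pos hck, pow_succ]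
        calc |Real.log (psi M k (Psi M w x)) - Real.log (psi M k (Psi M w y))|
            ≤ lam * |Real.log (Psi M w x) - Real.log (Psi M w y)| :=
              hlamP k hck _ _ hX hXB hY hYB
          _ ≤ lam * (lam ^ cnt M w * |Real.log x - Real.log y|) :=
              mul_le_mul_of_nonneg_left hbound hlam0.le
          _ = lam ^ cnt M w * lam * |Real.log x - Real.log y| := by ring
      · have hck0 : M k 1 0 = 0 := le_antisymm (not_lt.mp hck) ((hM k).1 1 0)
        have hdk : 0 < M k 1 1 := hw k (List.mem_cons_self) hck0
        refine ⟨⟨psi_pos hM h3 k hX.le (Or.inr ⟨hdk, hX⟩), hBinv k _ hX.le hXB⟩,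
          ⟨psi_pos hM h3 k hY.le (Or.inr ⟨hdk, hY⟩), hBinv k _ hY.le hYB⟩, ?_⟩
        rw [cnt_cons, if_neg hck]
        exact (c0_lip_mat hM h3 k hck0 hdk hX hY).trans hbound

lemma first_split (P : Fin s → Prop) (w : List (Fin s)) :
    (∀ x ∈ w, ¬P x) ∨ ∃ u k r, w = u ++ k :: r ∧ P k ∧ ∀ x ∈ u, ¬P x := by
  classical
  induction w with
  | nil => left; simp
  | cons a w ih =>
      by_cases hP : P a
      · right; exact ⟨[], a, w, rfl, hP, by simp⟩
      · rcases ih with h | ⟨u, k, r, hw, hk, hu⟩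
        · left
          intro x hx
          rcases List.mem_cons.mp hx with rfl | hx
          · exact hP
          · exact h x hx
        · right
          refine ⟨a :: u, k, r, by rw [hw]; rfl, hk, ?_⟩
          intro x hx
          rcases List.mem_cons.mp hx with rfl | hx
          · exact hP
          · exact hu x hx

lemma cnt_le_split (p : ℕ) (w : List (Fin s)) (hp : p + 1 ≤ cnt M w) :
    ∃ u k r, w = u ++ k :: r ∧ 0 < M k 1 0 ∧ p ≤ cnt M u := by
  classical
  induction w generalizing p with
  | nil => simp [cnt] at hp
  | cons a w ih =>
      rw [cnt_cons] at hp
      by_cases hca : 0 < M a 1 0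
      · rw [if_pos hca] at hp
        match p with
        | 0 => exact ⟨[], a, w, rfl, hca, by simp⟩
        | p' + 1 =>
            obtain ⟨u, k, r, hw, hk, hu⟩ := ih p' (by omega)
            refine ⟨a :: u, k, r, by rw [hw]; rfl, hk, ?_⟩
            rw [cnt_cons, if_pos hca]
            omega
      · rw [if_neg hca] at hp
        obtain ⟨u, k, r, hw, hk, hu⟩ := ih p hp
        refine ⟨a :: u, k, r, by rw [hw]; rfl, hk, ?_⟩
        rw [cnt_cons, if_neg hca]
        omega

lemma run_split (q : ℕ) : ∀ (p : ℕ) (w : List (Fin s)), cnt M w ≤ p →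
    (p+1)*(q+1) ≤ w.length →
    ∃ u v r, w = u ++ v ++ r ∧ v.length = q ∧ (∀ k ∈ v, ¬ 0 < M k 1 0) ∧
      (u = [] ∨ ∃ u' k', u = u' ++ [k'] ∧ 0 < M k' 1 0) := by
  intro p
  induction p with
  | zero =>
      intro w hcnt hlen
      rcases first_split (fun k => 0 < M k 1 0) w with hall | ⟨u1, k, r1, hw, hk, hu1⟩
      · refine ⟨[], w.take q, w.drop q, by simp, ?_, ?_, Or.inl rfl⟩
        · rw [List.length_take]; omega
        · exact fun k hk => hall k (List.take_subset _ _ hk)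
      · exfalso
        have : 1 ≤ cnt M w := by rw [hw, cnt_append, cnt_cons, if_pos hk]; omega
        omega
  | succ p' ih =>
      intro w hcnt hlen
      rcases first_split (fun k => 0 < M k 1 0) w with hall | ⟨u1, k, r1, hw, hk, hu1⟩
      · refine ⟨[], w.take q, w.drop q, by simp, ?_, ?_, Or.inl rfl⟩
        · rw [List.length_take]
          have h1 : q + 1 ≤ (p'+1+1)*(q+1) := by nlinarith
          omega
        · exact fun k hk => hall k (List.take_subset _ _ hk)
      · by_cases hq : q ≤ u1.length
        · refine ⟨[], u1.take q, u1.drop q ++ k :: r1, ?_, ?_, ?_, Or.inl rfl⟩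
          · rw [hw, List.nil_append, ← List.append_assoc, List.take_append_drop]
          · rw [List.length_take]; omega
          · exact fun x hx => hu1 x (List.take_subset _ _ hx)
        · have hwlen : w.length = u1.length + 1 + r1.length := by
            rw [hw]; simp [List.length_append]; omega
          have hc2 : cnt M r1 ≤ p' := by
            rw [hw, cnt_append, cnt_cons, if_pos hk] at hcnt
            omega
          have hlen2 : (p'+1)*(q+1) ≤ r1.length := by
            have e : (p'+1+1)*(q+1) = (p'+1)*(q+1) + (q+1) := by ring
            rw [e] at hlen
            generalize (p'+1)*(q+1) = A at hlen ⊢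
            omega
          obtain ⟨u, v, r, hr1, hvl, hv, hu⟩ := ih r1 hc2 hlen2
          refine ⟨u1 ++ k :: u, v, r, ?_, hvl, hv, ?_⟩
          · rw [hw, hr1]; simp
          · right
            rcases hu with rfl | ⟨u', k', rfl, hk'⟩
            · exact ⟨u1, k, by simp, hk⟩
            · exact ⟨u1 ++ k :: u', k', by simp, hk'⟩

noncomputable def tt (v : ℝ) : ℝ := (1+v)⁻¹

lemma tt_diff_le_ub {x y W : ℝ} (hx : 0 ≤ x) (hy : 0 ≤ y) (hxW : x ≤ W) (hyW : y ≤ W) :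
    |tt x - tt y| ≤ W := by
  have h1 : (0:ℝ) < 1 + x := by linarith
  have h2 : (0:ℝ) < 1 + y := by linarith
  have he : tt x - tt y = (y - x)/((1+x)*(1+y)) := by
    rw [tt, tt, inv_sub_inv h1.ne' h2.ne', show (1+y)-(1+x) = y - x by ring]
  rw [he, abs_div, abs_of_pos (by positivity : (0:ℝ) < (1+x)*(1+y))]
  have hnum : |y - x| ≤ W := abs_le.mpr ⟨by linarith, by linarith⟩
  have hden : (1:ℝ) ≤ (1+x)*(1+y) := by nlinarith
  exact (div_le_self (abs_nonneg _) hden).trans hnum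

lemma tt_diff_le_log_aux {x y : ℝ} (hx : 0 < x) (hy : 0 < y) (hxy : y ≤ x) :
    0 ≤ tt y - tt x ∧ tt y - tt x ≤ Real.log x - Real.log y := by
  have h1 : (0:ℝ) < 1 + x := by linarith
  have h2 : (0:ℝ) < 1 + y := by linarith
  have he : tt y - tt x = (x - y)/((1+y)*(1+x)) := by
    rw [tt, tt, inv_sub_inv h2.ne' h1.ne', show (1+x)-(1+y) = x - y by ring]
  constructor
  · rw [he]; exact div_nonneg (by linarith) (by positivity)
  · have hlog : (x - y)/x ≤ Real.log x - Real.log y := by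
      have := Real.log_le_sub_one_of_pos (show (0:ℝ) < y/x by positivity)
      rw [Real.log_div hy.ne' hx.ne'] at this
      have hd : y/x - 1 = (y-x)/x := by field_simp
      rw [hd] at this
      have : Real.log y - Real.log x ≤ (y-x)/x := this
      have h3 : -((y-x)/x) = (x-y)/x := by ring
      linarith [this]
    refine le_trans ?_ hlog
    rw [he]
    rcases eq_or_lt_of_le hxy with rfl | hlt
    · simp
    · apply div_le_div_of_nonneg_left (by linarith) hx
      nlinarith
  
lemma tt_diff_le_log {x y : ℝ} (hx : 0 < x) (hy : 0 < y) :
    |tt x - tt y| ≤ |Real.log x - Real.log y| := by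
  rcases le_total y x with h | h
  · obtain ⟨l, u⟩ := tt_diff_le_log_aux hx hy h
    rw [abs_sub_comm, abs_of_nonneg l,
      abs_of_nonneg (by linarith [Real.log_le_log hy h] : (0:ℝ) ≤ Real.log x - Real.log y)]
    exact u
  · obtain ⟨l, u⟩ := tt_diff_le_log_aux hy hx h
    rw [abs_of_nonneg l, abs_sub_comm,
      abs_of_nonneg (by linarith [Real.log_le_log hx h] : (0:ℝ) ≤ Real.log y - Real.log x)]
    exact u


lemma main_bound {B del kap lam : ℝ}
    (hM : ∀ k, ColAllowable (M k)) (h3 : ∀ k, M k 0 0 ≠ 0)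
    (hB1 : 1 ≤ B) (hBinv : ∀ k v, 0 ≤ v → v ≤ B → psi M k v ≤ B)
    (hdel0 : 0 < del)
    (hdelP : ∀ k, M k 1 0 = 0 → ∀ v, 0 ≤ v → v ≤ B → psi M k v ≤ v/(1+del*v))
    (hkap1 : 1 ≤ kap)
    (hkapP : ∀ k, 0 < M k 1 0 → ∀ W x y, 0 ≤ x → x ≤ W → 0 ≤ y → y ≤ W →
      |Real.log (psi M k x) - Real.log (psi M k y)| ≤ kap*W)
    (hlam0 : 0 < lam) (hlam1 : lam < 1)
    (hlamP : ∀ k, 0 < M k 1 0 → ∀ x y, 0 < x → x ≤ B → 0 < y → y ≤ B →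
      |Real.log (psi M k x) - Real.log (psi M k y)| ≤ lam*|Real.log x - Real.log y|)
    (p q : ℕ) (w : List (Fin s)) (hlen : (p+1)*(q+1) ≤ w.length)
    {x y : ℝ} (hx0 : 0 ≤ x) (hxB : x ≤ B) (hy0 : 0 ≤ y) (hyB : y ≤ B) :
    |tt (Psi M w x) - tt (Psi M w y)|
      ≤ max (lam^p * (kap*B)) (kap * (B/(1+q*del*B))) := by
  classical
  have hB0 : 0 < B := lt_of_lt_of_le one_pos hB1
  have hq0 : (0:ℝ) ≤ (q:ℝ) := Nat.cast_nonneg _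
  have hβq0 : 0 < B/(1+q*del*B) := by positivity
  have hβqB : B/(1+q*del*B) ≤ B := div_le_self hB0.le (le_add_of_nonneg_right (by positivity))
  by_cases hcol : ∃ k ∈ w, M k 1 0 = 0 ∧ M k 1 1 = 0
  · obtain ⟨k, hkmem, hkc, hkd⟩ := hcol
    obtain ⟨u, r, rfl⟩ := List.append_of_mem hkmem
    have hzero : ∀ z : ℝ, psi M k z = 0 := by
      intro z; rw [psi, hkc, hkd]; simp
    rw [Psi_append, Psi_append, Psi_cons, Psi_cons, hzero, hzero, sub_self, abs_zero]
    exact le_max_of_le_left (by positivity)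
  · push_neg at hcol
    have hnc : ∀ k ∈ w, M k 1 0 = 0 → 0 < M k 1 1 :=
      fun k hk h => ((hM k).1 1 1).lt_of_ne' (hcol k hk h)
    by_cases hcnt : cnt M w ≤ p
    · obtain ⟨u, v, r, rfl, hvl, hv, hu⟩ := run_split q p w hcnt hlen
      have hrx := Psi_mem hM h3 hBinv r hx0 hxB
      have hry := Psi_mem hM h3 hBinv r hy0 hyB
      have hv0 : ∀ k ∈ v, M k 1 0 = 0 :=
        fun k hk => le_antisymm (not_lt.mp (hv k hk)) ((hM k).1 1 0)
      have hvx := Psi_mem hM h3 hBinv v hrx.1 hrx.2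
      have hvy := Psi_mem hM h3 hBinv v hry.1 hry.2
      have hvxq : Psi M v (Psi M r x) ≤ B/(1+q*del*B) := by
        have := run_bound hM h3 hB0 hBinv hdel0 hdelP v hv0 hrx.1 hrx.2
        rwa [hvl] at this
      have hvyq : Psi M v (Psi M r y) ≤ B/(1+q*del*B) := by
        have := run_bound hM h3 hB0 hBinv hdel0 hdelP v hv0 hry.1 hry.2
        rwa [hvl] at this
      rcases hu with rfl | ⟨u', k', rfl, hk'⟩
      · simp only [List.nil_append]
        rw [Psi_append, Psi_append]
        refine le_max_of_le_right ?_
        exact (tt_diff_le_ub hvx.1 hvy.1 hvxq hvyq).trans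
          (le_mul_of_one_le_left hβq0.le hkap1)
      · have hnc' : ∀ kk ∈ u', M kk 1 0 = 0 → 0 < M kk 1 1 :=
          fun kk hk => hnc kk (by simp [hk])
        simp only [Psi_append, Psi_single]
        have hpX : 0 < psi M k' (Psi M v (Psi M r x)) :=
          psi_pos hM h3 k' hvx.1 (Or.inl hk')
        have hpXB : psi M k' (Psi M v (Psi M r x)) ≤ B := hBinv k' _ hvx.1 hvx.2
        have hpY : 0 < psi M k' (Psi M v (Psi M r y)) :=
          psi_pos hM h3 k' hvy.1 (Or.inl hk')
        have hpYB : psi M k' (Psi M v (Psi M r y)) ≤ B := hBinv k' _ hvy.1 hvy.2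
        have hlog1 : |Real.log (psi M k' (Psi M v (Psi M r x)))
            - Real.log (psi M k' (Psi M v (Psi M r y)))| ≤ kap * (B/(1+q*del*B)) :=
          hkapP k' hk' _ _ _ hvx.1 hvxq hvy.1 hvyq
        obtain ⟨⟨hPX, hPXB⟩, ⟨hPY, hPYB⟩, houter⟩ :=
          outer_bound hM h3 hBinv hlam0 hlamP u' hnc' hpX hpXB hpY hpYB
        have hone : lam ^ cnt M u' ≤ 1 := pow_le_one₀ hlam0.le hlam1.le
        refine le_max_of_le_right ?_
        calc |tt (Psi M u' (psi M k' (Psi M v (Psi M r x))))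
              - tt (Psi M u' (psi M k' (Psi M v (Psi M r y))))|
            ≤ |Real.log (Psi M u' (psi M k' (Psi M v (Psi M r x))))
              - Real.log (Psi M u' (psi M k' (Psi M v (Psi M r y))))| :=
              tt_diff_le_log hPX hPY
          _ ≤ lam ^ cnt M u' * |Real.log (psi M k' (Psi M v (Psi M r x)))
              - Real.log (psi M k' (Psi M v (Psi M r y)))| := houter
          _ ≤ 1 * (kap * (B/(1+q*del*B))) := by
              apply mul_le_mul hone hlog1 (abs_nonneg _) one_pos.le
          _ = kap * (B/(1+q*del*B)) := one_mul _
    · push_neg at hcnt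
      obtain ⟨u, k, r, rfl, hk, hcu⟩ := cnt_le_split p w hcnt
      have hrx := Psi_mem hM h3 hBinv r hx0 hxB
      have hry := Psi_mem hM h3 hBinv r hy0 hyB
      have hnc' : ∀ kk ∈ u, M kk 1 0 = 0 → 0 < M kk 1 1 :=
        fun kk hk => hnc kk (by simp [hk])
      have hpX : 0 < psi M k (Psi M r x) := psi_pos hM h3 k hrx.1 (Or.inl hk)
      have hpXB : psi M k (Psi M r x) ≤ B := hBinv k _ hrx.1 hrx.2
      have hpY : 0 < psi M k (Psi M r y) := psi_pos hM h3 k hry.1 (Or.inl hk)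
      have hpYB : psi M k (Psi M r y) ≤ B := hBinv k _ hry.1 hry.2
      have hlog1 : |Real.log (psi M k (Psi M r x)) - Real.log (psi M k (Psi M r y))|
          ≤ kap * B := hkapP k hk _ _ _ hrx.1 hrx.2 hry.1 hry.2
      obtain ⟨⟨hPX, hPXB⟩, ⟨hPY, hPYB⟩, houter⟩ :=
        outer_bound hM h3 hBinv hlam0 hlamP u hnc' hpX hpXB hpY hpYB
      have hpow : lam ^ cnt M u ≤ lam ^ p := pow_le_pow_of_le_one hlam0.le hlam1.le hcu
      rw [Psi_append, Psi_append, Psi_cons, Psi_cons]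
      refine le_max_of_le_left ?_
      calc |tt (Psi M u (psi M k (Psi M r x))) - tt (Psi M u (psi M k (Psi M r y)))|
          ≤ |Real.log (Psi M u (psi M k (Psi M r x)))
            - Real.log (Psi M u (psi M k (Psi M r y)))| := tt_diff_le_log hPX hPY
        _ ≤ lam ^ cnt M u * |Real.log (psi M k (Psi M r x))
            - Real.log (psi M k (Psi M r y))| := houter
        _ ≤ lam ^ p * (kap * B) :=
            mul_le_mul hpow hlog1 (abs_nonneg _) (by positivity)

lemma Pprod_succ (M : Fin s → Matrix (Fin 2) (Fin 2) ℝ) (ω : ℕ → Fin s) (n : ℕ) :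
    Pprod M ω (n+1) = M (ω 0) * Pprod M (ω ∘ Nat.succ) n := by
  unfold Pprod
  rw [List.range_succ_eq_map, List.map_cons, List.prod_cons, List.map_map]
  rfl

lemma mulVec_comp (k : Fin s) (X : Fin 2 → ℝ) (i : Fin 2) :
    ((M k).mulVec X) i = M k i 0 * X 0 + M k i 1 * X 1 := by
  simp [Matrix.mulVec, dotProduct, Fin.sum_univ_two]

lemma step_ratio (hM : ∀ k, ColAllowable (M k)) (h3 : ∀ k, M k 0 0 ≠ 0) (k : Fin s)
    {X : Fin 2 → ℝ} (hX0 : 0 < X 0) (hX1 : 0 ≤ X 1) :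
    ((M k).mulVec X) 1 / ((M k).mulVec X) 0 = psi M k (X 1 / X 0) := by
  have hA : 0 < M k 0 0 * X 0 + M k 0 1 * X 1 :=
    add_pos_of_pos_of_nonneg (mul_pos (apos hM h3 k) hX0) (mul_nonneg ((hM k).1 0 1) hX1)
  have hB' : 0 < M k 0 0 + M k 0 1 * (X 1 / X 0) := den_pos hM h3 k (by positivity)
  rw [mulVec_comp, mulVec_comp, psi, div_eq_div_iff hA.ne' hB'.ne']
  field_simp

lemma prod_ratio (hM : ∀ k, ColAllowable (M k)) (h3 : ∀ k, M k 0 0 ≠ 0)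
    (V : Fin 2 → ℝ) (hV0 : 0 < V 0) (hV1 : 0 ≤ V 1) :
    ∀ (n : ℕ) (ω : ℕ → Fin s),
      (0 < ((Pprod M ω n).mulVec V) 0 ∧ 0 ≤ ((Pprod M ω n).mulVec V) 1) ∧
      ((Pprod M ω n).mulVec V) 1 / ((Pprod M ω n).mulVec V) 0
        = Psi M ((List.range n).map ω) (V 1 / V 0) := by
  intro n
  induction n with
  | zero =>
      intro ω
      have h : (Pprod M ω 0).mulVec V = V := by
        unfold Pprod; simp [Matrix.one_mulVec]
      rw [h]
      exact ⟨⟨hV0, hV1⟩, by simp [Psi_nil]⟩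
  | succ n ih =>
      intro ω
      have hmv : (Pprod M ω (n+1)).mulVec V
          = (M (ω 0)).mulVec ((Pprod M (ω ∘ Nat.succ) n).mulVec V) := by
        rw [Pprod_succ, Matrix.mulVec_mulVec]
      obtain ⟨⟨hX0, hX1⟩, hrat⟩ := ih (ω ∘ Nat.succ)
      constructor
      · rw [hmv]
        constructor
        · rw [mulVec_comp]
          exact add_pos_of_pos_of_nonneg (mul_pos (apos hM h3 (ω 0)) hX0)
            (mul_nonneg ((hM (ω 0)).1 0 1) hX1)
        · rw [mulVec_comp]
          exact add_nonneg (mul_nonneg ((hM (ω 0)).1 1 0) hX0.le)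
            (mul_nonneg ((hM (ω 0)).1 1 1) hX1)
      · rw [hmv, step_ratio hM h3 (ω 0) hX0 hX1, hrat,
          List.range_succ_eq_map, List.map_cons, List.map_map, Psi_cons]

lemma nv_eq_tt {X : Fin 2 → ℝ} (hX0 : 0 < X 0) (hX1 : 0 ≤ X 1) :
    nv X = tt (X 1 / X 0) := by
  have h : 1 + X 1 / X 0 = (X 0 + X 1)/X 0 := by field_simp
  rw [nv, tt, h, inv_div]
end It

end Stmt11Aux

theorem stmt11 (s : ℕ) (M : Fin s → Matrix (Fin 2) (Fin 2) ℝ)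
    (hM : ∀ k, ColAllowable (M k))
    (h1 : ∀ k, M k 1 0 = 0 → M k 1 1 ≤ M k 0 0)
    (h2 : ∀ k, M k 0 1 = 0 → M k 1 1 < M k 0 0)
    (h3 : ∀ k, M k 0 0 ≠ 0) :
    ∀ V : Fin 2 → ℝ, 0 < V 0 → 0 < V 1 →
      ∃ F : (ℕ → Fin s) → (Fin 2 → ℝ),
        TendstoUniformly (fun n ω => Nv ((Pprod M ω n).mulVec V)) F atTop := by
  intro V hV0 hV1
  obtain ⟨B, del, kap, lam, ⟨hB1, hBv0, hBinv⟩, ⟨hdel0, hdelP⟩, ⟨hkap1, hkapP⟩,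
    ⟨hlam0, hlam1, hlamP⟩⟩ :=
    Stmt11Aux.exists_consts hM h1 h2 h3 (V 1 / V 0) (by positivity)
  have hB0 : 0 < B := lt_of_lt_of_le one_pos hB1
  set G : ℕ → (ℕ → Fin s) → (Fin 2 → ℝ) :=
    fun n ω => Nv ((Pprod M ω n).mulVec V) with hG
  have hUC : UniformCauchySeqOn G atTop Set.univ := by
    rw [Metric.uniformCauchySeqOn_iff]
    intro ε hε
    have hKB : 0 < kap * B := by positivity
    obtain ⟨p, hp⟩ := exists_pow_lt_of_lt_one (div_pos hε hKB) hlam1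
    have hpp : lam^p * (kap*B) < ε := (lt_div_iff₀ hKB).mp hp
    obtain ⟨q, hq⟩ := exists_nat_gt (kap*B/(ε*del*B))
    have hqq : kap * (B/(1+q*del*B)) < ε := by
      have hD : (0:ℝ) < 1 + q*del*B := by positivity
      rw [mul_div_assoc', div_lt_iff₀ hD]
      have h1' : kap*B < q * (ε*del*B) := (div_lt_iff₀ (by positivity)).mp hq
      nlinarith
    refine ⟨(p+1)*(q+1), ?_⟩
    intro m hm n hn ω _
    have hsplit : ∀ j, (p+1)*(q+1) ≤ j → ∃ z, 0 ≤ z ∧ z ≤ B ∧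
        ((Pprod M ω j).mulVec V) 1 / ((Pprod M ω j).mulVec V) 0
          = Stmt11Aux.Psi M ((List.range ((p+1)*(q+1))).map ω) z := by
      intro j hj
      have hrat := (Stmt11Aux.prod_ratio hM h3 V hV0 hV1.le j ω).2
      have hrange : (List.range j).map ω
          = (List.range ((p+1)*(q+1))).map ω
            ++ ((List.range (j - (p+1)*(q+1))).map (fun i => ω ((p+1)*(q+1) + i))) := by
        conv_lhs => rw [show j = (p+1)*(q+1) + (j - (p+1)*(q+1)) by omega]
        rw [List.range_add, List.map_append, List.map_map]
        rfl
      have hz := Stmt11Aux.Psi_mem hM h3 hBinv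
        ((List.range (j - (p+1)*(q+1))).map (fun i => ω ((p+1)*(q+1) + i)))
        (by positivity : (0:ℝ) ≤ V 1 / V 0) hBv0
      exact ⟨_, hz.1, hz.2, by rw [hrat, hrange, Stmt11Aux.Psi_append]⟩
    obtain ⟨zm, hzm0, hzmB, hzm⟩ := hsplit m hm
    obtain ⟨zn, hzn0, hznB, hzn⟩ := hsplit n hn
    have hposm := (Stmt11Aux.prod_ratio hM h3 V hV0 hV1.le m ω).1
    have hposn := (Stmt11Aux.prod_ratio hM h3 V hV0 hV1.le n ω).1
    have hbound := Stmt11Aux.main_bound hM h3 hB1 hBinv hdel0 hdelP hkap1 hkapP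
      hlam0 hlam1 hlamP p q ((List.range ((p+1)*(q+1))).map ω) (by simp) hzm0 hzmB hzn0 hznB
    have hmax : max (lam^p*(kap*B)) (kap*(B/(1+q*del*B))) < ε := max_lt hpp hqq
    have hmax0 : (0:ℝ) ≤ max (lam^p*(kap*B)) (kap*(B/(1+q*del*B))) :=
      le_max_of_le_left (by positivity)
    have hnvm : nv ((Pprod M ω m).mulVec V)
        = Stmt11Aux.tt (Stmt11Aux.Psi M ((List.range ((p+1)*(q+1))).map ω) zm) := by
      rw [Stmt11Aux.nv_eq_tt hposm.1 hposm.2, hzm]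
    have hnvn : nv ((Pprod M ω n).mulVec V)
        = Stmt11Aux.tt (Stmt11Aux.Psi M ((List.range ((p+1)*(q+1))).map ω) zn) := by
      rw [Stmt11Aux.nv_eq_tt hposn.1 hposn.2, hzn]
    refine lt_of_le_of_lt ?_ hmax
    rw [hG]
    apply (dist_pi_le_iff hmax0).mpr
    intro i
    have hcomp : ∀ i : Fin 2, dist (Nv ((Pprod M ω m).mulVec V) i)
        (Nv ((Pprod M ω n).mulVec V) i)
        = |nv ((Pprod M ω m).mulVec V) - nv ((Pprod M ω n).mulVec V)| := by
      intro i
      fin_cases i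
      · simp [Nv, Real.dist_eq]
      · simp [Nv, Real.dist_eq]
        rw [← abs_neg]; congr 1; ring
    rw [hcomp i, hnvm, hnvn]
    exact hbound
  have hF : ∀ ω : ℕ → Fin s, ∃ L, Tendsto (fun n => G n ω) atTop (nhds L) :=
    fun ω => cauchySeq_tendsto_of_complete (hUC.cauchySeq (Set.mem_univ ω))
  choose F hFt using hF
  exact ⟨F, tendstoUniformlyOn_univ.mp
    (hUC.tendstoUniformlyOn_of_tendsto (fun ω _ => hFt ω))⟩
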